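/- arXiv:2301.06233 — 2 statements merged into one kernel-verified Lean document; each statement's English description precedes it below -/
import Mathlib

section
/- If μ is a finite Borel measure on a metric space X and there exists d ≥ 0 such that lim_{r→0} log μ(B(x, r))/log r = d for μ-almost every x, then dim_H μ = d, where dim_H μ = inf{dim_H Z : μ(X \ Z) = 0}. -/
open Set Filter MeasureTheory Metric
open scoped Topology ENNReal

section Helpers

variable {X : Type*} [MetricSpace X] [MeasurableSpace X] [BorelSpace X]

private lemma young_rpow_tendsto {s : ℝ} (hs : 0 < s) :
    Tendsto (fun k : ℕ => ENNReal.ofReal ((1 / (k + 1 : ℝ)) ^ s)) atTop (𝓝 0) := by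
  have h1 : Tendsto (fun k : ℕ => (1 / (k + 1 : ℝ))) atTop (𝓝 0) :=
    tendsto_one_div_add_atTop_nhds_zero_nat
  have h2 : Tendsto (fun x : ℝ => x ^ s) (𝓝 0) (𝓝 0) := by
    have := (Real.continuousAt_rpow_const 0 s (Or.inr hs.le)).tendsto
    simpa [Real.zero_rpow hs.ne'] using this
  have h3 := (ENNReal.continuous_ofReal.tendsto 0).comp (h2.comp h1)
  simpa [Function.comp_def] using h3

/-- Mass distribution principle: if `μ (ball x r) ≤ r ^ s` for all `x ∈ A` and small `r`,
and `μ A ≠ 0`, then `dimH A ≥ s`. -/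
private lemma young_massDist_lower (μ : Measure X) [IsFiniteMeasure μ] {A : Set X} {s δ : ℝ}
    (hs : 0 < s) (hδ : 0 < δ)
    (hA : ∀ x ∈ A, ∀ r : ℝ, 0 < r → r ≤ δ → μ (ball x r) ≤ ENNReal.ofReal (r ^ s))
    (hpos : μ A ≠ 0) : ENNReal.ofReal s ≤ dimH A := by
  set c : ℝ≥0∞ := ENNReal.ofReal (2 ^ s) with hc
  have h2s : (0:ℝ) < 2 ^ s := Real.rpow_pos_of_pos (by norm_num) s
  have hc0 : c ≠ 0 := by simp [hc, ENNReal.ofReal_eq_zero, not_le, h2s]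
  have hctop : c ≠ ∞ := ENNReal.ofReal_ne_top
  have key : ∀ t : ℕ → Set X, A ⊆ ⋃ n, t n →
      (∀ n, EMetric.diam (t n) ≤ ENNReal.ofReal (δ / 4)) →
      μ A ≤ c * ∑' n, ⨆ _ : (t n).Nonempty, EMetric.diam (t n) ^ s := by
    intro t hcov hdiam
    calc μ A ≤ ∑' n, μ (t n ∩ A) := by
          refine (measure_mono ?_).trans (measure_iUnion_le _)
          intro x hx
          rcases mem_iUnion.1 (hcov hx) with ⟨n, hn⟩
          exact mem_iUnion.2 ⟨n, hn, hx⟩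
      _ ≤ ∑' n, c * ⨆ _ : (t n).Nonempty, EMetric.diam (t n) ^ s := by
          refine ENNReal.tsum_le_tsum fun n => ?_
          rcases (t n ∩ A).eq_empty_or_nonempty with he | ⟨x, hxt, hxA⟩
          · simp [he]
          have hne : (t n).Nonempty := ⟨x, hxt⟩
          rw [iSup_pos hne]
          have hdne : EMetric.diam (t n) ≠ ∞ :=
            ((hdiam n).trans_lt ENNReal.ofReal_lt_top).ne
          obtain ⟨D, hD⟩ : ∃ D : ℝ, D = (EMetric.diam (t n)).toReal := ⟨_, rfl⟩
          have hDle : D ≤ δ / 4 := by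
            have := ENNReal.toReal_mono ENNReal.ofReal_ne_top (hdiam n)
            rw [ENNReal.toReal_ofReal (by positivity)] at this
            rw [hD]; exact this
          have hDnn : 0 ≤ D := hD ▸ ENNReal.toReal_nonneg
          rcases eq_or_lt_of_le hDnn with h0 | h0
          · have hdz : EMetric.diam (t n) = 0 := by
              rw [← ENNReal.ofReal_toReal hdne, ← hD, ← h0, ENNReal.ofReal_zero]
            have hsub : t n ⊆ {x} := fun y hy => (EMetric.diam_eq_zero_iff.1 hdz) hy hxt
            have hx0 : μ {x} = 0 := by
              refine le_antisymm ?_ zero_le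
              refine ge_of_tendsto (young_rpow_tendsto hs) ?_
              obtain ⟨N, hN⟩ := exists_nat_one_div_lt hδ
              filter_upwards [eventually_ge_atTop N] with k hk
              have hkpos : (0:ℝ) < 1 / (k + 1) := by positivity
              have hkδ : 1 / (k + 1 : ℝ) ≤ δ := by
                refine le_of_lt (lt_of_le_of_lt ?_ hN)
                have hNk : (N + 1 : ℝ) ≤ k + 1 := by exact_mod_cast Nat.succ_le_succ hk
                exact one_div_le_one_div_of_le (by positivity) hNk
              refine le_trans (measure_mono ?_) (hA x hxA _ hkpos hkδ)
              exact singleton_subset_iff.2 (mem_ball_self hkpos)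
            calc μ (t n ∩ A) ≤ μ {x} := measure_mono fun y hy => hsub hy.1
              _ = 0 := hx0
              _ ≤ _ := zero_le
          · have hsub : t n ⊆ ball x (2 * D) := by
              intro y hy
              have h1 : edist y x ≤ EMetric.diam (t n) :=
                EMetric.edist_le_diam_of_mem hy hxt
              have h2 : dist y x ≤ D := by
                rw [dist_edist, hD]
                exact ENNReal.toReal_mono hdne h1
              exact mem_ball.2 (by linarith)
            have hb : μ (ball x (2 * D)) ≤ ENNReal.ofReal ((2 * D) ^ s) :=
              hA x hxA _ (by linarith) (by linarith)
            calc μ (t n ∩ A) ≤ μ (ball x (2 * D)) := measure_mono fun y hy => hsub hy.1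
              _ ≤ ENNReal.ofReal ((2 * D) ^ s) := hb
              _ = c * EMetric.diam (t n) ^ s := by
                  rw [Real.mul_rpow (by norm_num) h0.le,
                    ENNReal.ofReal_mul (by positivity), ← hc,
                    ← ENNReal.ofReal_rpow_of_pos h0, hD, ENNReal.ofReal_toReal hdne]
      _ = c * ∑' n, ⨆ _ : (t n).Nonempty, EMetric.diam (t n) ^ s := ENNReal.tsum_mul_left
  have hH : μH[s] A ≠ 0 := by
    intro h0
    have hle : μ A / c ≤ μH[s] A := by
      rw [Measure.hausdorffMeasure_apply]
      refine le_iSup₂_of_le (ENNReal.ofReal (δ / 4)) (by simp [ENNReal.ofReal_pos]; positivity) ?_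
      refine le_iInf fun t => le_iInf fun hcov => le_iInf fun hdiam => ?_
      rw [ENNReal.div_le_iff_le_mul (Or.inl hc0) (Or.inl hctop)]
      exact (key t hcov hdiam).trans (le_of_eq (mul_comm _ _))
    rw [h0, le_zero_iff, ENNReal.div_eq_zero_iff] at hle
    exact hpos (hle.resolve_right hctop)
  have hco : ((s.toNNReal : ℝ)) = s := Real.coe_toNNReal _ hs.le
  have hfin := le_dimH_of_hausdorffMeasure_ne_zero (d := s.toNNReal) (s := A)
    (by rw [hco]; exact hH)
  exact le_trans (le_of_eq rfl) hfin


/-- Frostman-type upper bound: if `μ (ball x r) ≥ r ^ s` for all `x ∈ A` and small `r`,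
then `dimH A ≤ s` (for a finite measure `μ`). -/
private lemma young_frostman_upper (μ : Measure X) [IsFiniteMeasure μ] {A : Set X} {s δ : ℝ}
    (hs : 0 < s) (hδ : 0 < δ)
    (hA : ∀ x ∈ A, ∀ r : ℝ, 0 < r → r ≤ δ → ENNReal.ofReal (r ^ s) ≤ μ (ball x r)) :
    dimH A ≤ ENNReal.ofReal s := by
  classical
  have hbound : μH[s] A ≤ ENNReal.ofReal (4 ^ s) * μ univ := by
    rw [Measure.hausdorffMeasure_apply]
    refine iSup₂_le fun R hR => ?_
    obtain ⟨ρ, hρ0, hρδ, hρR⟩ : ∃ ρ : ℝ, 0 < ρ ∧ ρ ≤ δ / 2 ∧ ENNReal.ofReal (2 * ρ) ≤ R := by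
      rcases eq_or_ne R ⊤ with hRt | hRt
      · exact ⟨δ / 2, by positivity, le_rfl, by simp [hRt]⟩
      · refine ⟨min (δ / 2) (R.toReal / 2), ?_, min_le_left _ _, ?_⟩
        · have h1 : 0 < R.toReal := ENNReal.toReal_pos hR.ne' hRt
          positivity
        · have h1 : 2 * min (δ / 2) (R.toReal / 2) ≤ R.toReal := by
            have := min_le_right (δ / 2) (R.toReal / 2); linarith
          exact le_trans (ENNReal.ofReal_le_ofReal h1)
            (le_of_eq (ENNReal.ofReal_toReal hRt))
    obtain ⟨c, hc⟩ : ∃ c : ℝ≥0∞, c = ENNReal.ofReal ((ρ / 2) ^ s) := ⟨_, rfl⟩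
    have hcball : ∀ x ∈ A, c ≤ μ (ball x (ρ / 2)) := fun x hx => by
      rw [hc]; exact hA x hx _ (by positivity) (by linarith)
    have hc0 : c ≠ 0 := by
      rw [hc]
      simp only [ne_eq, ENNReal.ofReal_eq_zero, not_le]
      exact Real.rpow_pos_of_pos (by positivity) s
    have hctop : c ≠ ⊤ := by rw [hc]; exact ENNReal.ofReal_ne_top
    obtain ⟨S, hSmax⟩ : ∃ S, Maximal (· ∈ {S : Set X | S ⊆ A ∧
        S.Pairwise fun a b => ρ ≤ dist a b}) S := by
      refine zorn_subset _ fun C hC hchain =>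
        ⟨⋃₀ C, ⟨?_, ?_⟩, fun u hu => subset_sUnion_of_mem hu⟩
      · exact sUnion_subset fun u hu => (hC hu).1
      · intro a ha b hb hab
        obtain ⟨u, hu, hau⟩ := ha
        obtain ⟨v, hv, hbv⟩ := hb
        rcases hchain.total hu hv with huv | hvu
        · exact (hC hv).2 (huv hau) hbv hab
        · exact (hC hu).2 hau (hvu hbv) hab
    have hSA : S ⊆ A := hSmax.1.1
    have hSsep : S.Pairwise fun a b => ρ ≤ dist a b := hSmax.1.2
    have hcard : ∀ F : Finset X, ↑F ⊆ S → (F.card : ℝ≥0∞) * c ≤ μ univ := by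
      intro F hFS
      have hdisj : (↑F : Set X).PairwiseDisjoint fun x => ball x (ρ / 2) := by
        intro a ha b hb hab
        refine ball_disjoint_ball ?_
        have := hSsep (hFS ha) (hFS hb) hab; linarith
      calc (F.card : ℝ≥0∞) * c = ∑ _x ∈ F, c := by
            rw [Finset.sum_const, nsmul_eq_mul]
        _ ≤ ∑ x ∈ F, μ (ball x (ρ / 2)) :=
            Finset.sum_le_sum fun x hx => hcball x (hSA (hFS hx))
        _ = μ (⋃ x ∈ F, ball x (ρ / 2)) :=
            (measure_biUnion_finset hdisj fun x _ => measurableSet_ball).symm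
        _ ≤ μ univ := measure_mono (subset_univ _)
    have hSfin : S.Finite := by
      rw [← Set.not_infinite]
      intro hinf
      obtain ⟨n, hn⟩ := ENNReal.exists_nat_gt
        (ENNReal.div_lt_top (measure_ne_top μ _) hc0).ne
      obtain ⟨F, hFS, hFfin, hFcard⟩ := hinf.exists_subset_ncard_eq n
      have hle := hcard hFfin.toFinset (by rwa [Set.Finite.coe_toFinset])
      rw [show hFfin.toFinset.card = n from by
        rw [← hFcard, Set.ncard_eq_toFinset_card F hFfin]] at hle
      have := (ENNReal.div_lt_iff (Or.inl hc0) (Or.inl hctop)).1 hn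
      exact absurd hle (not_le.2 this)
    have hcov : A ⊆ ⋃ x ∈ hSfin.toFinset, ball x ρ := by
      intro a ha
      by_contra hnc
      simp only [mem_iUnion, Set.Finite.mem_toFinset, mem_ball, not_exists, not_lt] at hnc
      have haS : insert a S ∈ {S : Set X | S ⊆ A ∧ S.Pairwise fun a b => ρ ≤ dist a b} := by
        refine ⟨insert_subset ha hSA, ?_⟩
        rw [Set.pairwise_insert]
        exact ⟨hSsep, fun b hb _ => ⟨hnc b hb, by rw [dist_comm]; exact hnc b hb⟩⟩
      have hmem : a ∈ S := hSmax.2 haS (subset_insert a S) (mem_insert a S)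
      have := hnc a hmem
      simp only [dist_self] at this
      linarith
    obtain ⟨n₀, hn₀⟩ : ∃ n₀ : ℕ, n₀ = hSfin.toFinset.card := ⟨_, rfl⟩
    obtain ⟨e, he⟩ : ∃ _ : (↥hSfin.toFinset) ≃ Fin n₀, True :=
      ⟨Fintype.equivFinOfCardEq (by rw [Fintype.card_coe, hn₀]), trivial⟩
    obtain ⟨t, ht⟩ : ∃ t : ℕ → Set X, t = fun n =>
        if h : n < n₀ then ball ((e.symm ⟨n, h⟩ : X)) ρ else ∅ := ⟨_, rfl⟩
    have htn : ∀ n (h : n < n₀), t n = ball ((e.symm ⟨n, h⟩ : X)) ρ := by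
      intro n h; rw [ht]; simp only [dif_pos h]
    have htn' : ∀ n, ¬ n < n₀ → t n = ∅ := by
      intro n h; rw [ht]; simp only [dif_neg h]
    have hcov' : A ⊆ ⋃ n, t n := by
      intro a ha
      rcases mem_iUnion₂.1 (hcov ha) with ⟨x, hxF, hax⟩
      refine mem_iUnion.2 ⟨(e ⟨x, hxF⟩ : Fin n₀), ?_⟩
      rw [htn _ (e ⟨x, hxF⟩).isLt]
      have hfe : (⟨((e ⟨x, hxF⟩ : Fin n₀) : ℕ), (e ⟨x, hxF⟩).isLt⟩ : Fin n₀) = e ⟨x, hxF⟩ :=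
        Fin.ext rfl
      rw [hfe, Equiv.symm_apply_apply]
      exact hax
    have hdiamball : ∀ x : X, EMetric.diam (ball x ρ) ≤ ENNReal.ofReal (2 * ρ) := by
      intro x
      rw [← Metric.emetric_ball]
      refine le_trans EMetric.diam_ball (le_of_eq ?_)
      rw [ENNReal.ofReal_mul (by norm_num)]
      norm_num
    have hdiam : ∀ n, EMetric.diam (t n) ≤ R := by
      intro n
      by_cases hlt : n < n₀
      · rw [htn n hlt]; exact le_trans (hdiamball _) hρR
      · rw [htn' n hlt]; simp [EMetric.diam]
    refine le_trans (iInf₂_le_of_le t hcov' (iInf_le _ hdiam)) ?_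
    have hzero : ∀ n ∉ Finset.range n₀,
        (⨆ _ : (t n).Nonempty, EMetric.diam (t n) ^ s) = 0 := by
      intro n hn
      rw [Finset.mem_range] at hn
      rw [htn' n hn]
      simp
    unfold EMetric.diam at hzero
    rw [tsum_eq_sum hzero]
    have hterm : ∀ n ∈ Finset.range n₀,
        (⨆ _ : (t n).Nonempty, EMetric.diam (t n) ^ s) ≤ ENNReal.ofReal ((2 * ρ) ^ s) := by
      intro n hn
      rw [Finset.mem_range] at hn
      refine iSup_le fun _ => ?_
      rw [htn n hn]
      calc EMetric.diam (ball _ ρ) ^ s ≤ (ENNReal.ofReal (2 * ρ)) ^ s :=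
            ENNReal.rpow_le_rpow (hdiamball _) hs.le
        _ = ENNReal.ofReal ((2 * ρ) ^ s) := ENNReal.ofReal_rpow_of_pos (by positivity)
    calc ∑ n ∈ Finset.range n₀, (⨆ _ : (t n).Nonempty, EMetric.diam (t n) ^ s)
        ≤ ∑ _n ∈ Finset.range n₀, ENNReal.ofReal ((2 * ρ) ^ s) := Finset.sum_le_sum hterm
      _ = (n₀ : ℝ≥0∞) * ENNReal.ofReal ((2 * ρ) ^ s) := by
          rw [Finset.sum_const, Finset.card_range, nsmul_eq_mul]
      _ = (n₀ : ℝ≥0∞) * (ENNReal.ofReal (4 ^ s) * c) := by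
          congr 1
          rw [hc, ← ENNReal.ofReal_mul (by positivity : (0:ℝ) ≤ 4 ^ s),
            ← Real.mul_rpow (by norm_num) (by positivity),
            show (4:ℝ) * (ρ / 2) = 2 * ρ by ring]
      _ = ENNReal.ofReal (4 ^ s) * ((n₀ : ℝ≥0∞) * c) := by ring
      _ ≤ ENNReal.ofReal (4 ^ s) * μ univ := by
          gcongr
          refine hcard hSfin.toFinset (by rw [Set.Finite.coe_toFinset]) |>.trans_eq' ?_
          rw [hn₀]
  have hne : μH[s] A ≠ ⊤ :=
    ne_top_of_le_ne_top (ENNReal.mul_ne_top ENNReal.ofReal_ne_top (measure_ne_top μ _)) hbound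
  have hdim := dimH_le_of_hausdorffMeasure_ne_top (d := s.toNNReal) (s := A)
    (by rw [Real.coe_toNNReal _ hs.le]; exact hne)
  exact le_trans (le_of_eq rfl) hdim


/-- From the local dimension limit, extract power bounds on ball measures at small scales. -/
private lemma young_convert (μ : Measure X) [IsFiniteMeasure μ] {x : X} {d ε : ℝ} (hε : 0 < ε)
    (hx : Tendsto (fun r : ℝ => Real.log (μ (ball x r)).toReal / Real.log r)
      (𝓝[>] (0 : ℝ)) (𝓝 d))
    (hx' : ∀ r : ℝ, 0 < r → μ (ball x r) ≠ 0) :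
    ∃ m : ℕ, ∀ r : ℝ, 0 < r → r ≤ 1 / (m + 1) →
      ENNReal.ofReal (r ^ (d + ε)) ≤ μ (ball x r) ∧
      μ (ball x r) ≤ ENNReal.ofReal (r ^ (d - ε)) := by
  have hev : ∀ᶠ r in 𝓝[>] (0:ℝ),
      |Real.log (μ (ball x r)).toReal / Real.log r - d| < ε := by
    have h' := Metric.tendsto_nhds.1 hx ε hε
    simpa [Real.dist_eq] using h'
  rcases Metric.mem_nhdsWithin_iff.1 hev with ⟨δ, hδ0, hδ⟩
  obtain ⟨m, hm⟩ := exists_nat_one_div_lt (lt_min_iff.mpr ⟨hδ0, one_pos⟩ : (0:ℝ) < min δ 1)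
  refine ⟨m, fun r hr0 hrm => ?_⟩
  have hrδ : r < δ := lt_of_le_of_lt hrm (lt_of_lt_of_le hm (min_le_left _ _))
  have hr1 : r < 1 := lt_of_le_of_lt hrm (lt_of_lt_of_le hm (min_le_right _ _))
  have habs : |Real.log (μ (ball x r)).toReal / Real.log r - d| < ε := by
    refine hδ ⟨?_, hr0⟩
    rw [Metric.mem_ball, Real.dist_eq, sub_zero, abs_of_pos hr0]
    exact hrδ
  have hL : Real.log r < 0 := Real.log_neg hr0 hr1
  have hB : 0 < (μ (ball x r)).toReal := ENNReal.toReal_pos (hx' r hr0) (measure_ne_top μ _)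
  rw [abs_sub_lt_iff] at habs
  obtain ⟨h1, h2⟩ := habs
  have hlow : (d + ε) * Real.log r < Real.log (μ (ball x r)).toReal :=
    (div_lt_iff_of_neg hL).1
      (by linarith : Real.log (μ (ball x r)).toReal / Real.log r < d + ε)
  have hhigh : Real.log (μ (ball x r)).toReal < (d - ε) * Real.log r :=
    (lt_div_iff_of_neg hL).1
      (by linarith : d - ε < Real.log (μ (ball x r)).toReal / Real.log r)
  have key1 : r ^ (d + ε) ≤ (μ (ball x r)).toReal := by
    rw [Real.rpow_def_of_pos hr0, ← Real.exp_log hB]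
    exact Real.exp_le_exp.2 (by rw [mul_comm]; exact hlow.le)
  have key2 : (μ (ball x r)).toReal ≤ r ^ (d - ε) := by
    rw [Real.rpow_def_of_pos hr0, ← Real.exp_log hB]
    exact Real.exp_le_exp.2 (by rw [mul_comm]; exact hhigh.le)
  constructor
  · calc ENNReal.ofReal (r ^ (d + ε)) ≤ ENNReal.ofReal (μ (ball x r)).toReal :=
        ENNReal.ofReal_le_ofReal key1
      _ = μ (ball x r) := ENNReal.ofReal_toReal (measure_ne_top μ _)
  · calc μ (ball x r) = ENNReal.ofReal (μ (ball x r)).toReal :=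
        (ENNReal.ofReal_toReal (measure_ne_top μ _)).symm
      _ ≤ ENNReal.ofReal (r ^ (d - ε)) := ENNReal.ofReal_le_ofReal key2

end Helpers

/-- Young's dimension criterion: if `μ` is a (nonzero) finite Borel measure on a metric
space and the local dimension `lim_{r→0} log μ(B(x,r)) / log r` exists and equals `d` for
`μ`-a.e. `x`, then the Hausdorff dimension of `μ`
(`inf { dim_H Z : μ(X \ Z) = 0 }`) equals `d`. -/
theorem young_dimension_criterion
    {X : Type*} [MetricSpace X] [MeasurableSpace X] [BorelSpace X]
    [SecondCountableTopology X]
    (μ : Measure X) [IsFiniteMeasure μ] (hμ : μ ≠ 0)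
    (d : ℝ) (hd : 0 ≤ d)
    (h : ∀ᵐ x ∂μ, Tendsto (fun r : ℝ => Real.log (μ (ball x r)).toReal / Real.log r)
      (𝓝[>] (0 : ℝ)) (𝓝 d)) :
    (⨅ (Z : Set X) (_ : μ Zᶜ = 0), dimH Z) = ENNReal.ofReal d := by
  classical
  have hG : μ {x : X | ¬ ∀ r : ℝ, 0 < r → μ (ball x r) ≠ 0} = 0 := by
    apply measure_null_of_locally_null
    intro x hx
    simp only [mem_setOf_eq, not_forall, not_not] at hx
    obtain ⟨r, hr0, hr⟩ := hx
    exact ⟨ball x r, mem_nhdsWithin_of_mem_nhds (ball_mem_nhds x hr0), hr⟩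
  have hT : μ {x : X | ¬ Tendsto (fun r : ℝ =>
      Real.log (μ (ball x r)).toReal / Real.log r) (𝓝[>] (0 : ℝ)) (𝓝 d)} = 0 := ae_iff.1 h
  obtain ⟨A, hAdef⟩ : ∃ A : ℝ → ℕ → Set X, A = fun (ε : ℝ) (m : ℕ) =>
      {x : X | ∀ r : ℝ, 0 < r → r ≤ 1 / ((m : ℝ) + 1) →
        ENNReal.ofReal (r ^ (d + ε)) ≤ μ (ball x r) ∧
        μ (ball x r) ≤ ENNReal.ofReal (r ^ (d - ε))} := ⟨_, rfl⟩
  have hfull : ∀ ε : ℝ, 0 < ε → μ (⋃ m, A ε m)ᶜ = 0 := by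
    intro ε hε
    refine measure_mono_null (fun x hx => ?_) (measure_union_null hT hG)
    by_contra hmem
    simp only [mem_union, mem_setOf_eq, not_or, not_not] at hmem
    obtain ⟨hten, hpos⟩ := hmem
    obtain ⟨m, hm⟩ := young_convert μ hε hten hpos
    exact hx (mem_iUnion.2 ⟨m, by rw [hAdef]; exact fun r h1 h2 => hm r h1 h2⟩)
  refine le_antisymm ?_ ?_
  · refine ENNReal.le_of_forall_pos_le_add fun ε hε _ => ?_
    have hε' : (0:ℝ) < ε := by exact_mod_cast hε
    have hub : (⨅ (Z : Set X) (_ : μ Zᶜ = 0), dimH Z) ≤ ENNReal.ofReal (d + ε) := by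
      refine le_trans (iInf₂_le (⋃ m, A (ε:ℝ) m) (hfull ε hε')) ?_
      rw [dimH_iUnion]
      refine iSup_le fun m => ?_
      refine young_frostman_upper μ (by linarith : (0:ℝ) < d + ε)
        (by positivity : (0:ℝ) < 1 / (m + 1)) ?_
      intro x hx r h1 h2
      rw [hAdef] at hx
      exact (hx r h1 h2).1
    calc (⨅ (Z : Set X) (_ : μ Zᶜ = 0), dimH Z) ≤ ENNReal.ofReal (d + ε) := hub
      _ = ENNReal.ofReal d + ENNReal.ofReal (ε:ℝ) := ENNReal.ofReal_add hd ε.coe_nonneg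
      _ = ENNReal.ofReal d + ε := by rw [ENNReal.ofReal_coe_nnreal]
  · refine le_iInf fun Z => le_iInf fun hZ => ?_
    refine ENNReal.le_of_forall_pos_le_add fun ε hε _ => ?_
    rcases le_or_gt d (ε : ℝ) with hdε | hdε
    · calc ENNReal.ofReal d ≤ ENNReal.ofReal (ε:ℝ) := ENNReal.ofReal_le_ofReal hdε
        _ = (ε : ℝ≥0∞) := ENNReal.ofReal_coe_nnreal
        _ ≤ dimH Z + ε := le_add_self
    · have hε' : (0:ℝ) < ε := by exact_mod_cast hε
      have hμuniv : μ univ ≠ 0 := by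
        simpa [Measure.measure_univ_eq_zero] using hμ
      have hpos : ∃ m, μ (A (ε:ℝ) m ∩ Z) ≠ 0 := by
        by_contra hc
        push_neg at hc
        have h1 : μ (⋃ m, A (ε:ℝ) m ∩ Z) = 0 := measure_iUnion_null hc
        have h2 : μ ((⋃ m, A (ε:ℝ) m)ᶜ ∪ Zᶜ) = 0 := measure_union_null (hfull ε hε') hZ
        refine hμuniv ?_
        refine measure_mono_null (fun x _ => ?_) (measure_union_null h1 h2)
        by_cases hxA : x ∈ ⋃ m, A (ε:ℝ) m
        · by_cases hxZ : x ∈ Z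
          · rcases mem_iUnion.1 hxA with ⟨m, hm⟩
            exact mem_union_left _ (mem_iUnion.2 ⟨m, hm, hxZ⟩)
          · exact mem_union_right _ (mem_union_right _ hxZ)
        · exact mem_union_right _ (mem_union_left _ hxA)
      obtain ⟨m, hm⟩ := hpos
      have hlow : ENNReal.ofReal (d - ε) ≤ dimH (A (ε:ℝ) m ∩ Z) := by
        refine young_massDist_lower μ (by linarith : (0:ℝ) < d - ε)
          (by positivity : (0:ℝ) < 1 / (m + 1)) ?_ hm
        intro x hx r h1 h2
        have hx1 := hx.1
        rw [hAdef] at hx1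
        exact (hx1 r h1 h2).2
      calc ENNReal.ofReal d = ENNReal.ofReal ((d - ε) + ε) := by rw [sub_add_cancel]
        _ = ENNReal.ofReal (d - ε) + ENNReal.ofReal (ε:ℝ) :=
            ENNReal.ofReal_add (by linarith) ε.coe_nonneg
        _ ≤ dimH Z + ε := by
            rw [ENNReal.ofReal_coe_nnreal]
            exact add_le_add_left (le_trans hlow (dimH_mono inter_subset_right)) _
end

section
/- For subsets A of X and B of Y (metric spaces), the product set A × B (with the max metric) satisfies dim_H A + dim_H B ≤ dim_H(A × B) ≤ underline{dim}_B(A × B) ≤ overline{dim}_B(A × B) ≤ overline{dim}_B A + overline{dim}_B B. -/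
open Set Filter Metric MeasureTheory
open scoped Topology ENNReal NNReal MeasureTheory

/-- `coverNum Z δ` is the least number of balls of radius `δ` needed to cover `Z`. -/
noncomputable def coverNum {X : Type*} [MetricSpace X] (Z : Set X) (δ : ℝ) : ℕ :=
  sInf {n : ℕ | ∃ s : Finset X, s.card = n ∧ Z ⊆ ⋃ x ∈ s, Metric.ball x δ}

/-- Lower box dimension. -/
noncomputable def lowerBoxDim {X : Type*} [MetricSpace X] (Z : Set X) : ℝ≥0∞ :=
  Filter.liminf
    (fun δ : ℝ => ENNReal.ofReal (Real.log (coverNum Z δ) / (-Real.log δ)))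
    (𝓝[>] (0 : ℝ))

/-- Upper box dimension. -/
noncomputable def upperBoxDim {X : Type*} [MetricSpace X] (Z : Set X) : ℝ≥0∞ :=
  Filter.limsup
    (fun δ : ℝ => ENNReal.ofReal (Real.log (coverNum Z δ) / (-Real.log δ)))
    (𝓝[>] (0 : ℝ))

section CoverNum


variable {X Y : Type*} [MetricSpace X] [MetricSpace Y]

lemma coverSet_nonempty {Z : Set X} (hZ : TotallyBounded Z) {δ : ℝ} (hδ : 0 < δ) :
    {n : ℕ | ∃ s : Finset X, s.card = n ∧ Z ⊆ ⋃ x ∈ s, Metric.ball x δ}.Nonempty := by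
  obtain ⟨t, htf, hcov⟩ := Metric.totallyBounded_iff.1 hZ δ hδ
  exact ⟨htf.toFinset.card, htf.toFinset, rfl, by simpa [Set.Finite.mem_toFinset] using hcov⟩

lemma coverNum_spec {Z : Set X} (hZ : TotallyBounded Z) {δ : ℝ} (hδ : 0 < δ) :
    ∃ s : Finset X, s.card = coverNum Z δ ∧ Z ⊆ ⋃ x ∈ s, Metric.ball x δ :=
  Nat.sInf_mem (coverSet_nonempty hZ hδ)

lemma coverNum_pos {Z : Set X} (hZ : TotallyBounded Z) (hne : Z.Nonempty) {δ : ℝ} (hδ : 0 < δ) :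
    1 ≤ coverNum Z δ := by
  rcases coverNum_spec hZ hδ with ⟨s, hcard, hcov⟩
  rcases hne with ⟨z, hz⟩
  rcases Set.mem_iUnion₂.1 (hcov hz) with ⟨x, hx, -⟩
  exact hcard ▸ Finset.card_pos.2 ⟨x, hx⟩

lemma totallyBounded_prod {A : Set X} {B : Set Y} (hA : TotallyBounded A) (hB : TotallyBounded B) :
    TotallyBounded (A ×ˢ B) := by
  rw [Metric.totallyBounded_iff]
  intro ε hε
  obtain ⟨tA, hAf, hAcov⟩ := Metric.totallyBounded_iff.1 hA ε hε
  obtain ⟨tB, hBf, hBcov⟩ := Metric.totallyBounded_iff.1 hB ε hε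
  refine ⟨tA ×ˢ tB, hAf.prod hBf, ?_⟩
  rintro ⟨a, b⟩ ⟨ha, hb⟩
  rcases Set.mem_iUnion₂.1 (hAcov ha) with ⟨x, hx, hax⟩
  rcases Set.mem_iUnion₂.1 (hBcov hb) with ⟨y, hy, hby⟩
  exact Set.mem_iUnion₂.2 ⟨(x, y), ⟨hx, hy⟩, by rw [← ball_prod_same]; exact ⟨hax, hby⟩⟩

lemma coverNum_prod_le {A : Set X} {B : Set Y} (hA : TotallyBounded A) (hB : TotallyBounded B)
    {δ : ℝ} (hδ : 0 < δ) :
    coverNum (A ×ˢ B) δ ≤ coverNum A δ * coverNum B δ := by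
  obtain ⟨s, hs, hscov⟩ := coverNum_spec hA hδ
  obtain ⟨t, ht, htcov⟩ := coverNum_spec hB hδ
  have hcov : A ×ˢ B ⊆ ⋃ p ∈ s ×ˢ t, Metric.ball p δ := by
    rintro ⟨a, b⟩ ⟨ha, hb⟩
    rcases Set.mem_iUnion₂.1 (hscov ha) with ⟨x, hx, hax⟩
    rcases Set.mem_iUnion₂.1 (htcov hb) with ⟨y, hy, hby⟩
    exact Set.mem_iUnion₂.2 ⟨(x, y), Finset.mk_mem_product hx hy,
      by rw [← ball_prod_same]; exact ⟨hax, hby⟩⟩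
  calc coverNum (A ×ˢ B) δ ≤ (s ×ˢ t).card := Nat.sInf_le ⟨s ×ˢ t, rfl, hcov⟩
  _ = coverNum A δ * coverNum B δ := by rw [Finset.card_product, hs, ht]

lemma ennreal_limsup_add_le {α : Type*} {f : Filter α} (u v : α → ℝ≥0∞) :
    limsup (fun x => u x + v x) f ≤ limsup u f + limsup v f := by
  rcases eq_top_or_lt_top (limsup u f) with h | hu
  · simp [h]
  rcases eq_top_or_lt_top (limsup v f) with h | hv
  · simp [h]
  refine ENNReal.le_of_forall_pos_le_add fun ε hε _ => ?_
  have h2 : (0:ℝ≥0∞) < ε / 2 :=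
    ENNReal.div_pos (by exact_mod_cast hε.ne') ENNReal.ofNat_ne_top
  have hu' : ∀ᶠ x in f, u x < limsup u f + ε / 2 :=
    eventually_lt_of_limsup_lt (by exact ENNReal.lt_add_right hu.ne h2.ne')
  have hv' : ∀ᶠ x in f, v x < limsup v f + ε / 2 :=
    eventually_lt_of_limsup_lt (by exact ENNReal.lt_add_right hv.ne h2.ne')
  refine limsup_le_of_le (by isBoundedDefault) ?_
  filter_upwards [hu', hv'] with x h1x h2x
  calc u x + v x ≤ (limsup u f + ε / 2) + (limsup v f + ε / 2) :=
        add_le_add h1x.le h2x.le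
  _ = limsup u f + limsup v f + ε := by rw [add_add_add_comm, ENNReal.add_halves]

end CoverNum

section HdInfra

variable {Z : Type*} [MetricSpace Z]

/-- summand -/
noncomputable def m0 (d : ℝ) (E : Set Z) : ℝ≥0∞ := ⨆ _ : E.Nonempty, EMetric.diam E ^ d

/-- Hausdorff pre-measure at scale `r`. -/
noncomputable def Hd (d : ℝ) (r : ℝ≥0∞) (S : Set Z) : ℝ≥0∞ :=
  ⨅ (t : ℕ → Set Z) (_ : S ⊆ ⋃ n, t n) (_ : ∀ n, EMetric.diam (t n) ≤ r), ∑' n, m0 d (t n)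

lemma m0_empty (d : ℝ) : m0 d (∅ : Set Z) = 0 := by simp [m0]

lemma m0_le (d : ℝ) (E : Set Z) : m0 d E ≤ EMetric.diam E ^ d := by
  simp only [m0, iSup_le_iff]; intro; exact le_rfl

lemma m0_of_nonempty {E : Set Z} (h : E.Nonempty) (d : ℝ) : m0 d E = EMetric.diam E ^ d := by
  simp [m0, h]

lemma extend_diam_eq {d : ℝ} {r : ℝ≥0∞} {E : Set Z} (h : EMetric.diam E ≤ r) :
    MeasureTheory.extend (fun s (_ : Metric.ediam s ≤ r) => EMetric.diam s ^ d) E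
      = EMetric.diam E ^ d := by
  unfold MeasureTheory.extend
  exact iInf_pos h

lemma extend_diam_top {d : ℝ} {r : ℝ≥0∞} {E : Set Z} (h : ¬ EMetric.diam E ≤ r) :
    MeasureTheory.extend (fun s (_ : Metric.ediam s ≤ r) => EMetric.diam s ^ d) E = ∞ := by
  unfold MeasureTheory.extend
  exact iInf_neg h

lemma hausdorffMeasure_eq_iSup_Hd [MeasurableSpace Z] [BorelSpace Z] (d : ℝ) (S : Set Z) :
    μH[d] S = ⨆ (r : ℝ≥0∞) (_ : 0 < r), Hd d r S := by
  rw [MeasureTheory.Measure.hausdorffMeasure_apply]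
  rfl

lemma Hd_le_of_cover {d : ℝ} {r : ℝ≥0∞} {S : Set Z} (t : ℕ → Set Z) (hcov : S ⊆ ⋃ n, t n)
    (hdiam : ∀ n, EMetric.diam (t n) ≤ r) : Hd d r S ≤ ∑' n, m0 d (t n) := by
  refine iInf_le_of_le t ?_
  exact iInf_le_of_le hcov (iInf_le_of_le hdiam le_rfl)

lemma Hd_mono {d : ℝ} {r : ℝ≥0∞} {S S' : Set Z} (h : S ⊆ S') : Hd d r S ≤ Hd d r S' := by
  refine le_iInf fun t => le_iInf fun hcov => le_iInf fun hdiam => ?_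
  exact Hd_le_of_cover t (h.trans hcov) hdiam

lemma Hd_anti {d : ℝ} {r r' : ℝ≥0∞} (h : r ≤ r') {S : Set Z} : Hd d r' S ≤ Hd d r S := by
  refine le_iInf fun t => le_iInf fun hcov => le_iInf fun hdiam => ?_
  exact Hd_le_of_cover t hcov fun n => (hdiam n).trans h

lemma Hd_empty (d : ℝ) (r : ℝ≥0∞) : Hd d r (∅ : Set Z) = 0 := by
  refine le_antisymm ?_ (zero_le)
  have := Hd_le_of_cover (d := d) (r := r) (S := (∅ : Set Z)) (fun _ => ∅) (by simp) (by simp [EMetric.diam])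
  simpa [m0_empty] using this

/-- `Hd` agrees with `mkMetric'.pre` of the right function. -/
lemma Hd_eq_pre (d : ℝ) (r : ℝ≥0∞) (S : Set Z) :
    Hd d r S =
      OuterMeasure.mkMetric'.pre (fun E : Set Z => EMetric.diam E ^ d) r S := by
  rw [OuterMeasure.mkMetric'.pre, OuterMeasure.boundedBy_apply]
  refine le_antisymm ?_ ?_
  · -- Hd ≤ pre
    refine le_iInf fun t => le_iInf fun hcov => ?_
    by_cases hall : ∀ n, EMetric.diam (t n) ≤ r
    · refine (Hd_le_of_cover t hcov hall).trans ?_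
      refine ENNReal.tsum_le_tsum fun n => ?_
      rcases (t n).eq_empty_or_nonempty with h | h
      · simp [h, m0_empty]
      · rw [m0_of_nonempty h]
        rw [extend_diam_eq (hall n)]
        exact le_iSup (fun _ : (t n).Nonempty => EMetric.diam (t n) ^ d) h
    · push_neg at hall
      obtain ⟨n₀, hn₀⟩ := hall
      have hne : (t n₀).Nonempty := by
        rcases (t n₀).eq_empty_or_nonempty with h | h
        · exfalso; rw [h] at hn₀; simp [EMetric.diam] at hn₀
        · exact h
      have : (⨆ _ : (t n₀).Nonempty,
          MeasureTheory.extend (fun s (_ : Metric.ediam s ≤ r) => EMetric.diam s ^ d) (t n₀)) = ∞ := by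
        rw [extend_diam_top (not_le.2 hn₀)]
        simp [hne]
      refine le_trans ?_ (ENNReal.le_tsum n₀)
      rw [this]
      exact le_top
  · -- pre ≤ Hd
    refine le_iInf fun t => le_iInf fun hcov => le_iInf fun hdiam => ?_
    refine iInf_le_of_le t (iInf_le_of_le hcov ?_)
    refine ENNReal.tsum_le_tsum fun n => ?_
    rcases (t n).eq_empty_or_nonempty with h | h
    · simp [h, m0_empty]
    · rw [m0_of_nonempty h]
      rw [extend_diam_eq (hdiam n)]
      exact iSup_le fun _ => le_rfl

lemma Hd_iUnion_le (d : ℝ) (r : ℝ≥0∞) (Aks : ℕ → Set Z) :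
    Hd d r (⋃ k, Aks k) ≤ ∑' k, Hd d r (Aks k) := by
  simp only [Hd_eq_pre]
  exact measure_iUnion_le _

/-- finite-cover upper bound for `Hd` -/
lemma Hd_le_finset_cover {W : Type*} {d : ℝ} {r bound : ℝ≥0∞} {S : Set Z}
    (P : Finset W) (c : W → Set Z)
    (hcov : S ⊆ ⋃ p ∈ P, c p) (hdiam : ∀ p ∈ P, EMetric.diam (c p) ≤ r)
    (hb : ∀ p ∈ P, m0 d (c p) ≤ bound) :
    Hd d r S ≤ P.card * bound := by
  classical
  set e := P.equivFin
  set t : ℕ → Set Z := fun n => if h : n < P.card then c ((e.symm ⟨n, h⟩ : P) : W) else ∅ with ht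
  have hcov' : S ⊆ ⋃ n, t n := by
    intro x hx
    rcases Set.mem_iUnion₂.1 (hcov hx) with ⟨p, hp, hxp⟩
    refine Set.mem_iUnion.2 ⟨(e ⟨p, hp⟩ : Fin P.card), ?_⟩
    have hlt : ((e ⟨p, hp⟩ : Fin P.card) : ℕ) < P.card := (e ⟨p, hp⟩).2
    simp only [ht, dif_pos hlt]
    rw [show (⟨(e ⟨p, hp⟩ : Fin P.card), hlt⟩ : Fin P.card) = e ⟨p, hp⟩ from rfl]
    rw [Equiv.symm_apply_apply]
    exact hxp
  have hdiam' : ∀ n, EMetric.diam (t n) ≤ r := by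
    intro n
    by_cases h : n < P.card
    · simp only [ht, dif_pos h]; exact hdiam _ (e.symm ⟨n, h⟩).2
    · simp [ht, dif_neg h, EMetric.diam]
  refine (Hd_le_of_cover t hcov' hdiam').trans ?_
  have hsupp : ∀ n ∉ Finset.range P.card, m0 d (t n) = 0 := by
    intro n hn
    rw [Finset.mem_range] at hn
    simp [ht, dif_neg hn, m0_empty]
  rw [tsum_eq_sum hsupp]
  have : ∀ n ∈ Finset.range P.card, m0 d (t n) ≤ bound := by
    intro n hn
    rw [Finset.mem_range] at hn
    simp only [ht, dif_pos hn]
    exact hb _ (e.symm ⟨n, hn⟩).2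
  calc ∑ n ∈ Finset.range P.card, m0 d (t n) ≤ ∑ _n ∈ Finset.range P.card, bound :=
        Finset.sum_le_sum this
  _ = P.card * bound := by simp [Finset.sum_const, mul_comm]

lemma add_le_dimH_prod {X Y : Type*} [MetricSpace X] [MetricSpace Y]
    [SecondCountableTopology X] [SecondCountableTopology Y]
    {A : Set X} {B : Set Y} (hAb : TotallyBounded A)
    (s t : ℝ≥0) (hs : 0 < s) (ht : 0 < t)
    (hsA : (s : ℝ≥0∞) < dimH A) (htB : (t : ℝ≥0∞) < dimH B) :
    (s : ℝ≥0∞) + (t : ℝ≥0∞) ≤ dimH (A ×ˢ B) := by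
  classical
  borelize X Y
  -- pick intermediate exponents
  obtain ⟨σ, hsσ, hσA⟩ := ENNReal.lt_iff_exists_nnreal_btwn.1 hsA
  have htmin : (t : ℝ≥0∞) < min (dimH B) ((t : ℝ≥0∞) + s) :=
    lt_min htB (ENNReal.lt_add_right ENNReal.coe_ne_top (by exact_mod_cast hs.ne'))
  obtain ⟨τ, htτ, hτmin⟩ := ENNReal.lt_iff_exists_nnreal_btwn.1 htmin
  have hτB : (τ : ℝ≥0∞) < dimH B := hτmin.trans_le (min_le_left _ _)
  have hτts : (τ : ℝ) ≤ (t : ℝ) + (s : ℝ) := by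
    have h := (hτmin.trans_le (min_le_right _ _)).le
    rw [← ENNReal.coe_add] at h
    exact_mod_cast h
  have hsσ' : (s : ℝ) < (σ : ℝ) := by exact_mod_cast hsσ
  have htτ' : (t : ℝ) < (τ : ℝ) := by exact_mod_cast htτ
  have hτ0 : 0 < (τ : ℝ) := lt_trans (by exact_mod_cast ht) htτ'
  -- the real exponents
  set u : ℝ := (s : ℝ) + (t : ℝ) with hu
  set ε : ℝ := (τ : ℝ) - (t : ℝ) with hε
  have hε0 : 0 < ε := by simp only [hε]; linarith
  have huτ : 0 ≤ u - (τ : ℝ) := by simp only [hu]; linarith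
  -- infinite measures and scales
  have hμA : μH[(σ : ℝ)] A = ∞ := hausdorffMeasure_of_lt_dimH hσA
  have hμB : μH[(τ : ℝ)] B = ∞ := hausdorffMeasure_of_lt_dimH hτB
  obtain ⟨rA, hrA0, hrA⟩ : ∃ rA : ℝ≥0∞, 0 < rA ∧ 1 ≤ Hd (σ : ℝ) rA A := by
    by_contra hcon; push_neg at hcon
    have : μH[(σ : ℝ)] A ≤ 1 := by
      rw [hausdorffMeasure_eq_iSup_Hd]
      exact iSup₂_le fun r hr => (hcon r hr).le
    rw [hμA] at this
    exact absurd this (by simp)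
  obtain ⟨rB, hrB0, hrB⟩ : ∃ rB : ℝ≥0∞, 0 < rB ∧ 1 ≤ Hd (τ : ℝ) rB B := by
    by_contra hcon; push_neg at hcon
    have : μH[(τ : ℝ)] B ≤ 1 := by
      rw [hausdorffMeasure_eq_iSup_Hd]
      exact iSup₂_le fun r hr => (hcon r hr).le
    rw [hμB] at this
    exact absurd this (by simp)
  set r₁ : ℝ≥0∞ := min (min (rA / 8) rB) 1 with hr₁def
  have hr₁0 : 0 < r₁ :=
    lt_min (lt_min (ENNReal.div_pos hrA0.ne' (by norm_num)) hrB0) one_pos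
  have hr₁rB : r₁ ≤ rB := le_trans (min_le_left _ _) (min_le_right _ _)
  have hr₁1 : r₁ ≤ 1 := min_le_right _ _
  have h8r₁ : 8 * r₁ ≤ rA := by
    have h1 : r₁ ≤ rA / 8 := le_trans (min_le_left _ _) (min_le_left _ _)
    rw [mul_comm]
    exact ENNReal.mul_le_of_le_div h1
  -- constants
  set w : ℝ≥0∞ := 2⁻¹ with hwdef
  have hw0 : w ≠ 0 := by norm_num [hwdef]
  have hwtop : w ≠ ∞ := by norm_num [hwdef]
  have hw1 : w < 1 := by norm_num [hwdef]
  have hw1' : w ≤ 1 := hw1.le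
  set q : ℝ≥0∞ := w ^ ε with hqdef
  have hq1 : q < 1 := ENNReal.rpow_lt_one hw1 hε0
  have h1q0 : (0:ℝ≥0∞) < 1 - q := tsub_pos_iff_lt.2 hq1
  have h1qtop : (1 - q) ≠ ∞ := by
    exact ne_top_of_le_ne_top ENNReal.one_ne_top tsub_le_self
  set b : ℕ → ℝ≥0∞ := fun k => w * (1 - q) * q ^ k with hbdef
  have hq0 : (0:ℝ≥0∞) < q := ENNReal.rpow_pos (by norm_num [hwdef]) hwtop
  have hbpos : ∀ k, b k ≠ 0 := fun k =>
    mul_ne_zero (mul_ne_zero hw0 h1q0.ne') (pow_ne_zero k hq0.ne')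
  have hbsum : ∑' k, b k = w := by
    rw [ENNReal.tsum_mul_left, ENNReal.tsum_geometric, mul_assoc,
      ENNReal.mul_inv_cancel h1q0.ne' h1qtop, mul_one]
  set c₀ : ℝ≥0∞ := (4:ℝ≥0∞) ^ (-(σ:ℝ)) * w ^ (u - (τ:ℝ)) * w * (1 - q) with hc₀def
  have hc₀0 : c₀ ≠ 0 := by
    apply mul_ne_zero (mul_ne_zero (mul_ne_zero ?_ ?_) hw0) h1q0.ne'
    · exact (ENNReal.rpow_pos (by norm_num) (by norm_num)).ne'
    · exact (ENNReal.rpow_pos (by norm_num [hwdef]) hwtop).ne'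
  -- reduce to the pre-measure bound
  rw [show ((s : ℝ≥0∞) + (t : ℝ≥0∞)) = ((s + t : ℝ≥0) : ℝ≥0∞) by push_cast; ring]
  apply le_dimH_of_hausdorffMeasure_ne_zero (d := s + t)
  have hcast : (((s + t : ℝ≥0)) : ℝ) = u := by push_cast [hu]; ring
  rw [hcast]
  suffices hW : c₀ ≤ Hd u r₁ (A ×ˢ B) by
    have h1 : Hd u r₁ (A ×ˢ B) ≤ μH[u] (A ×ˢ B) := by
      rw [hausdorffMeasure_eq_iSup_Hd]
      exact le_iSup₂_of_le r₁ hr₁0 le_rfl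
    intro h0
    rw [h0] at h1
    exact hc₀0 (le_antisymm (le_trans hW h1) (zero_le))
  -- main covering argument
  refine le_iInf fun U => le_iInf fun hcov => le_iInf fun hdiam => ?_
  set dd : ℕ → ℝ≥0∞ := fun n => EMetric.diam (U n) with hdddef
  set V : ℕ → Set X := fun n => Prod.fst '' U n with hVdef
  set Wn : ℕ → Set Y := fun n => Prod.snd '' U n with hWndef
  have hVd : ∀ n, EMetric.diam (V n) ≤ dd n := fun n => by
    have h := (LipschitzWith.prod_fst).ediam_image_le (U n)
    rw [ENNReal.coe_one, one_mul] at h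
    exact h
  have hWd : ∀ n, EMetric.diam (Wn n) ≤ dd n := fun n => by
    have h := (LipschitzWith.prod_snd).ediam_image_le (U n)
    rw [ENNReal.coe_one, one_mul] at h
    exact h
  have hdd1 : ∀ n, dd n ≤ 1 := fun n => (hdiam n).trans hr₁1
  have hddtop : ∀ n, dd n ≠ ∞ := fun n => ne_top_of_le_ne_top ENNReal.one_ne_top (hdd1 n)
  -- dyadic index
  have hκex : ∀ n, dd n ≠ 0 → ∃ k : ℕ, w ^ (k + 1) < dd n := by
    intro n h
    obtain ⟨m, hm⟩ := ENNReal.exists_inv_two_pow_lt h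
    refine ⟨m, lt_of_le_of_lt ?_ hm⟩
    rw [pow_succ]
    exact mul_le_of_le_one_right' hw1'
  set κ : ℕ → ℕ := fun n => if h : ∃ k : ℕ, w ^ (k + 1) < dd n then Nat.find h else 0 with hκdef
  have hκ1 : ∀ n, dd n ≠ 0 → w ^ (κ n + 1) < dd n := by
    intro n h
    simp only [hκdef, dif_pos (hκex n h)]
    exact Nat.find_spec (hκex n h)
  have hκ2 : ∀ n, dd n ≤ w ^ (κ n) := by
    intro n
    by_cases h : dd n = 0
    · simp [h]
    · simp only [hκdef, dif_pos (hκex n h)]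
      rcases hfind : Nat.find (hκex n h) with _ | k
      · simpa using hdd1 n
      · have := Nat.find_min (hκex n h) (by omega : k < Nat.find (hκex n h))
        exact not_lt.1 this
  set S : ℕ → X → ℝ≥0∞ := fun k x =>
    ∑' n, if κ n = k ∧ dd n ≠ 0 ∧ x ∈ V n then dd n ^ (τ:ℝ) else 0 with hSdef
  -- slice inequality
  have hslice : ∀ x ∈ A, (1:ℝ≥0∞) ≤ ∑' k, S k x := by
    intro x hx
    set g : ℕ → Set Y := fun n => if x ∈ V n then Wn n else ∅ with hgdef
    have hgcov : B ⊆ ⋃ n, g n := by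
      intro y hy
      obtain ⟨n, hn⟩ := Set.mem_iUnion.1 (hcov (Set.mk_mem_prod hx hy))
      have hxV : x ∈ V n := ⟨(x, y), hn, rfl⟩
      have hyW : y ∈ Wn n := ⟨(x, y), hn, rfl⟩
      exact Set.mem_iUnion.2 ⟨n, by simp only [hgdef, if_pos hxV]; exact hyW⟩
    have hgdiam : ∀ n, EMetric.diam (g n) ≤ rB := by
      intro n
      by_cases hxV : x ∈ V n
      · simp only [hgdef, if_pos hxV]
        exact (hWd n).trans ((hdiam n).trans hr₁rB)
      · simp [hgdef, hxV, EMetric.diam]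
    have h1 : (1:ℝ≥0∞) ≤ ∑' n, m0 (τ:ℝ) (g n) :=
      hrB.trans (Hd_le_of_cover g hgcov hgdiam)
    have h2 : ∀ n, m0 (τ:ℝ) (g n) ≤
        (if dd n ≠ 0 ∧ x ∈ V n then dd n ^ (τ:ℝ) else 0) := by
      intro n
      by_cases hxV : x ∈ V n
      · simp only [hgdef, if_pos hxV]
        rcases (Wn n).eq_empty_or_nonempty with hWe | hWe
        · simp [hWe, m0_empty]
        · rw [m0_of_nonempty hWe]
          by_cases hd0 : dd n = 0
          · have hWd0 : EMetric.diam (Wn n) = 0 :=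
              le_antisymm ((hWd n).trans_eq hd0) (zero_le)
            rw [hWd0, ENNReal.zero_rpow_of_pos hτ0]
            exact zero_le
          · rw [if_pos ⟨hd0, hxV⟩]
            exact ENNReal.rpow_le_rpow (hWd n) hτ0.le
      · simp [hgdef, hxV, m0_empty]
    have h3 : ∑' n, (if dd n ≠ 0 ∧ x ∈ V n then dd n ^ (τ:ℝ) else 0) = ∑' k, S k x := by
      rw [ENNReal.tsum_comm (f := fun k n =>
        if κ n = k ∧ dd n ≠ 0 ∧ x ∈ V n then dd n ^ (τ:ℝ) else 0)]
      refine tsum_congr fun n => ?_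
      rw [tsum_eq_single (κ n) (fun k' hk' => by
        rw [if_neg]; rintro ⟨rfl, -⟩; exact hk' rfl)]
      by_cases hP : dd n ≠ 0 ∧ x ∈ V n
      · rw [if_pos hP, if_pos ⟨rfl, hP⟩]
      · rw [if_neg hP, if_neg (by rintro ⟨-, h⟩; exact hP h)]
    calc (1:ℝ≥0∞) ≤ ∑' n, m0 (τ:ℝ) (g n) := h1
    _ ≤ ∑' n, (if dd n ≠ 0 ∧ x ∈ V n then dd n ^ (τ:ℝ) else 0) := ENNReal.tsum_le_tsum h2
    _ = ∑' k, S k x := h3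
  set Ak : ℕ → Set X := fun k => {x ∈ A | b k ≤ S k x} with hAkdef
  have hAunion : A ⊆ ⋃ k, Ak k := by
    intro x hx
    have hex : ∃ k, b k ≤ S k x := by
      by_contra hcon; push_neg at hcon
      have hle : ∑' k, S k x ≤ ∑' k, b k := ENNReal.tsum_le_tsum fun k => (hcon k).le
      have h1 := le_trans (hslice x hx) (hle.trans_eq hbsum)
      rw [hwdef] at h1
      norm_num at h1
    exact Set.mem_iUnion.2 ⟨hex.choose, hx, hex.choose_spec⟩
  set T : ℕ → ℝ≥0∞ := fun k => ∑' n, if κ n = k ∧ dd n ≠ 0 then dd n ^ u else 0 with hTdef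
  have hkey : ∀ k, c₀ * Hd (σ:ℝ) rA (Ak k) ≤ T k := by
    intro k
    rcases (Ak k).eq_empty_or_nonempty with hAk | hAk
    · simp [hAk, Hd_empty]
    set Dk : ℝ≥0∞ := w ^ k with hDkdef
    have hDk0 : Dk ≠ 0 := pow_ne_zero k hw0
    have hDktop : Dk ≠ ∞ := by
      simp only [hDkdef]
      exact ENNReal.pow_ne_top hwtop
    have hDklt : Dk < 2 * Dk := by
      rw [two_mul]
      exact ENNReal.lt_add_right hDktop hDk0
    obtain ⟨x₀, hx₀⟩ := hAk
    have hx₀S : b k ≤ S k x₀ := hx₀.2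
    have hexn : ∃ n, κ n = k ∧ dd n ≠ 0 ∧ x₀ ∈ V n := by
      by_contra hcon
      have hS0 : S k x₀ = 0 := by
        simp only [hSdef]
        convert tsum_zero with n
        exact if_neg fun hc => hcon ⟨n, hc⟩
      rw [hS0] at hx₀S
      exact hbpos k (le_zero_iff.1 hx₀S)
    obtain ⟨n₁, hn₁k, hn₁0, -⟩ := hexn
    have hDkrA : 4 * Dk ≤ rA := by
      have h1 : w ^ (k + 1) < r₁ := by
        have := hκ1 n₁ hn₁0
        rw [hn₁k] at this
        exact lt_of_lt_of_le this (hdiam n₁)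
      have hDk2 : Dk = 2 * w ^ (k + 1) := by
        have h2 : (2:ℝ≥0∞) * 2⁻¹ = 1 := ENNReal.mul_inv_cancel (by norm_num) (by norm_num)
        calc Dk = Dk * 1 := (mul_one _).symm
        _ = (2 * 2⁻¹) * Dk := by rw [h2]; ring
        _ = 2 * (Dk * 2⁻¹) := by ring
        _ = 2 * w ^ (k + 1) := by rw [hDkdef, pow_succ, hwdef]
      calc 4 * Dk = 8 * w ^ (k + 1) := by rw [hDk2]; ring
      _ ≤ 8 * r₁ := mul_le_mul_right h1.le 8
      _ ≤ rA := h8r₁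
    obtain ⟨t0, ht0fin, ht0cov⟩ :=
      EMetric.totallyBounded_iff.1 hAb Dk (pos_iff_ne_zero.2 hDk0)
    set pick : X → X := fun p =>
      if h : ∃ c ∈ t0, p ∈ EMetric.ball c Dk then h.choose else p with hpickdef
    have hpick : ∀ p ∈ A, pick p ∈ t0 ∧ edist p (pick p) < Dk := by
      intro p hp
      have hex : ∃ c ∈ t0, p ∈ EMetric.ball c Dk := by
        have h := ht0cov hp
        rw [Set.mem_iUnion₂] at h
        obtain ⟨c, hc, hpc⟩ := h
        exact ⟨c, hc, hpc⟩
      simp only [hpickdef, dif_pos hex]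
      obtain ⟨hc, hball⟩ := hex.choose_spec
      exact ⟨hc, hball⟩
    set Sep : Finset X → Prop := fun P =>
      ↑P ⊆ Ak k ∧ ∀ p ∈ P, ∀ p' ∈ P, p ≠ p' → 2 * Dk < edist p p' with hSepdef
    have hSepcard : ∀ P, Sep P → P.card ≤ ht0fin.toFinset.card := by
      intro P hP
      refine Finset.card_le_card_of_injOn pick ?_ ?_
      · intro p hp
        rw [Finset.mem_coe, Set.Finite.mem_toFinset]
        exact (hpick p (hP.1 hp).1).1
      · intro p hp p' hp' heq
        by_contra hne
        have hsep := hP.2 p hp p' hp' hne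
        have h1 := (hpick p (hP.1 hp).1).2
        have h2 := (hpick p' (hP.1 hp').1).2
        have h2' : edist (pick p) p' < Dk := by rw [heq, edist_comm]; exact h2
        have hlt : edist p p' < 2 * Dk := by
          calc edist p p' ≤ edist p (pick p) + edist (pick p) p' := edist_triangle _ _ _
          _ < Dk + Dk := ENNReal.add_lt_add h1 h2'
          _ = 2 * Dk := (two_mul Dk).symm
        exact lt_irrefl _ (hsep.trans hlt)
    set Cset : Set ℕ := {m | ∃ P : Finset X, Sep P ∧ P.card = m} with hCsetdef
    have hCne : Cset.Nonempty := ⟨0, ∅, ⟨by simp, by simp⟩, rfl⟩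
    have hCbdd : BddAbove Cset := ⟨ht0fin.toFinset.card, by
      rintro m ⟨P, hP, rfl⟩; exact hSepcard P hP⟩
    obtain ⟨P, hPsep, hPcard⟩ := Nat.sSup_mem hCne hCbdd
    have hmax : ∀ x ∈ Ak k, ∃ p ∈ P, edist x p ≤ 2 * Dk := by
      intro x hxk
      by_contra hcon
      push_neg at hcon
      have hxP : x ∉ P := by
        intro hxP
        have := hcon x hxP
        simp [edist_self] at this
      have hSep' : Sep (insert x P) := by
        constructor
        · intro y hy
          rcases Finset.mem_insert.1 (by exact_mod_cast hy) with rfl | hyP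
          · exact hxk
          · exact hPsep.1 hyP
        · intro p hp p' hp' hne
          rcases Finset.mem_insert.1 hp with rfl | hpP
          · rcases Finset.mem_insert.1 hp' with rfl | hp'P
            · exact absurd rfl hne
            · exact hcon p' hp'P
          · rcases Finset.mem_insert.1 hp' with rfl | hp'P
            · rw [edist_comm]; exact hcon p hpP
            · exact hPsep.2 p hpP p' hp'P hne
      have hmem : P.card + 1 ∈ Cset :=
        ⟨insert x P, hSep', by rw [Finset.card_insert_of_notMem hxP]⟩
      have := le_csSup hCbdd hmem
      omega
    have hcover : Ak k ⊆ ⋃ p ∈ P, EMetric.closedBall p (2 * Dk) := by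
      intro x hx
      obtain ⟨p, hp, hle⟩ := hmax x hx
      exact Set.mem_iUnion₂.2 ⟨p, hp, hle⟩
    have hHdAk : Hd (σ:ℝ) rA (Ak k) ≤ (P.card : ℝ≥0∞) * (4 * Dk) ^ (σ:ℝ) := by
      refine Hd_le_finset_cover P (fun p => EMetric.closedBall p (2 * Dk)) hcover ?_ ?_
      · intro p hp
        refine le_trans EMetric.diam_closedBall ?_
        calc (2:ℝ≥0∞) * (2 * Dk) = 4 * Dk := by ring
        _ ≤ rA := hDkrA
      · intro p hp
        refine (m0_le _ _).trans ?_
        refine ENNReal.rpow_le_rpow ?_ σ.coe_nonneg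
        exact le_trans EMetric.diam_closedBall (le_of_eq (by ring))
    have hcount1 : ∀ n, (∑ p ∈ P, if κ n = k ∧ dd n ≠ 0 ∧ p ∈ V n then dd n ^ (τ:ℝ) else 0)
        ≤ (if κ n = k ∧ dd n ≠ 0 then dd n ^ (τ:ℝ) else 0) := by
      intro n
      by_cases hc : κ n = k ∧ dd n ≠ 0
      · rw [if_pos hc]
        by_cases hex : ∃ p ∈ P, p ∈ V n
        · obtain ⟨p₀, hp₀, hp₀V⟩ := hex
          have huniq : ∀ p ∈ P, p ∈ V n → p = p₀ := by
            intro p hp hpV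
            by_contra hne
            have hsep := hPsep.2 p hp p₀ hp₀ hne
            have hdle : edist p p₀ ≤ dd n :=
              le_trans (EMetric.edist_le_diam_of_mem hpV hp₀V) (hVd n)
            have hlt : dd n < 2 * Dk := by
              refine lt_of_le_of_lt ?_ hDklt
              have hh := hκ2 n
              rw [hc.1] at hh
              rw [hDkdef]
              exact hh
            exact lt_irrefl _ ((hsep.trans_le hdle).trans_le hlt.le)
          rw [Finset.sum_eq_single_of_mem p₀ hp₀ (fun p hp hne =>
            if_neg fun hcond => hne (huniq p hp hcond.2.2))]
          split
          · exact le_rfl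
          · exact zero_le
        · rw [Finset.sum_eq_zero fun p hp =>
            if_neg fun hcond => hex ⟨p, hp, hcond.2.2⟩]
          exact zero_le
      · rw [if_neg hc, Finset.sum_eq_zero fun p hp =>
          if_neg fun hcond => hc ⟨hcond.1, hcond.2.1⟩]
    have hswap : (∑ p ∈ P, S k p) = ∑' n, ∑ p ∈ P,
        (if κ n = k ∧ dd n ≠ 0 ∧ p ∈ V n then dd n ^ (τ:ℝ) else 0) := by
      simp only [hSdef]
      exact (Summable.tsum_finsetSum fun p _ => ENNReal.summable).symm
    have hcard_b : (P.card : ℝ≥0∞) * b k ≤ ∑ p ∈ P, S k p := by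
      have h := Finset.card_nsmul_le_sum P (fun p => S k p) (b k)
        (fun p hp => (hPsep.1 hp).2)
      rwa [nsmul_eq_mul] at h
    have hTk1 : (w ^ (k + 1) : ℝ≥0∞) ^ (u - (τ:ℝ)) *
        (∑' n, if κ n = k ∧ dd n ≠ 0 then dd n ^ (τ:ℝ) else 0) ≤ T k := by
      rw [← ENNReal.tsum_mul_left]
      refine ENNReal.tsum_le_tsum fun n => ?_
      by_cases hc : κ n = k ∧ dd n ≠ 0
      · rw [if_pos hc]
        simp only [hTdef, if_pos hc]
        have h1 : (w ^ (k + 1) : ℝ≥0∞) ^ (u - (τ:ℝ)) ≤ dd n ^ (u - (τ:ℝ)) :=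
          ENNReal.rpow_le_rpow (by rw [← hc.1]; exact (hκ1 n hc.2).le) huτ
        calc (w ^ (k + 1) : ℝ≥0∞) ^ (u - (τ:ℝ)) * dd n ^ (τ:ℝ)
            ≤ dd n ^ (u - (τ:ℝ)) * dd n ^ (τ:ℝ) := mul_le_mul_left h1 _
        _ = dd n ^ (u - (τ:ℝ) + (τ:ℝ)) := (ENNReal.rpow_add _ _ hc.2 (hddtop n)).symm
        _ = dd n ^ u := by ring_nf
      · simp [hTdef, hc]
    have hconst : c₀ * (4 * Dk) ^ (σ:ℝ) ≤ (w ^ (k + 1) : ℝ≥0∞) ^ (u - (τ:ℝ)) * b k := by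
      have h4 : ((4:ℝ≥0∞)) ^ (-(σ:ℝ)) * (4:ℝ≥0∞) ^ ((σ:ℝ)) = 1 := by
        rw [← ENNReal.rpow_add _ _ (by norm_num) (by norm_num)]
        simp
      have hmulr : (4 * Dk : ℝ≥0∞) ^ (σ:ℝ) = (4:ℝ≥0∞) ^ (σ:ℝ) * Dk ^ (σ:ℝ) :=
        ENNReal.mul_rpow_of_ne_top (show (4:ℝ≥0∞) ≠ ⊤ by norm_num) hDktop ((σ:ℝ))
      have hDkr : Dk ^ (σ:ℝ) = w ^ ((k:ℝ) * (σ:ℝ)) := by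
        rw [hDkdef, ← ENNReal.rpow_natCast w k, ← ENNReal.rpow_mul]
      have hwk1 : (w ^ (k + 1) : ℝ≥0∞) ^ (u - (τ:ℝ)) = w ^ (((k:ℝ) + 1) * (u - (τ:ℝ))) := by
        rw [← ENNReal.rpow_natCast w (k + 1), ← ENNReal.rpow_mul]
        push_cast
        ring_nf
      have hqk : q ^ k = w ^ (ε * (k:ℝ)) := by
        rw [hqdef, ← ENNReal.rpow_natCast (w ^ ε) k, ← ENNReal.rpow_mul]
      have hexp : w ^ ((u - (τ:ℝ)) + (k:ℝ) * (σ:ℝ)) ≤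
          w ^ (((k:ℝ) + 1) * (u - (τ:ℝ)) + ε * (k:ℝ)) := by
        apply ENNReal.rpow_le_rpow_of_exponent_ge hw1'
        have hk0 : (0:ℝ) ≤ (k:ℝ) := Nat.cast_nonneg k
        have hsε : u - (τ:ℝ) + ε = (s:ℝ) := by simp only [hu, hε]; ring
        nlinarith [hsσ'.le]
      calc c₀ * (4 * Dk) ^ (σ:ℝ)
          = ((4:ℝ≥0∞) ^ (-(σ:ℝ)) * (4:ℝ≥0∞) ^ ((σ:ℝ))) *
            ((w ^ (u - (τ:ℝ)) * w ^ ((k:ℝ) * (σ:ℝ))) * (w * (1 - q))) := by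
            rw [hc₀def, hmulr, hDkr]; ring
      _ = w ^ ((u - (τ:ℝ)) + (k:ℝ) * (σ:ℝ)) * (w * (1 - q)) := by
            rw [h4, one_mul, ← ENNReal.rpow_add _ _ hw0 hwtop]
      _ ≤ w ^ (((k:ℝ) + 1) * (u - (τ:ℝ)) + ε * (k:ℝ)) * (w * (1 - q)) :=
            mul_le_mul_left hexp _
      _ = (w ^ (k + 1) : ℝ≥0∞) ^ (u - (τ:ℝ)) * b k := by
            simp only [hbdef]
            rw [hwk1, hqk, ENNReal.rpow_add _ _ hw0 hwtop]
            ring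
    calc c₀ * Hd (σ:ℝ) rA (Ak k)
        ≤ c₀ * ((P.card : ℝ≥0∞) * (4 * Dk) ^ (σ:ℝ)) := mul_le_mul_right hHdAk _
    _ = (P.card : ℝ≥0∞) * (c₀ * (4 * Dk) ^ (σ:ℝ)) := by ring
    _ ≤ (P.card : ℝ≥0∞) * ((w ^ (k + 1) : ℝ≥0∞) ^ (u - (τ:ℝ)) * b k) :=
          mul_le_mul_right hconst _
    _ = (w ^ (k + 1) : ℝ≥0∞) ^ (u - (τ:ℝ)) * ((P.card : ℝ≥0∞) * b k) := by ring
    _ ≤ (w ^ (k + 1) : ℝ≥0∞) ^ (u - (τ:ℝ)) * ∑ p ∈ P, S k p :=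
          mul_le_mul_right hcard_b _
    _ = (w ^ (k + 1) : ℝ≥0∞) ^ (u - (τ:ℝ)) * ∑' n, ∑ p ∈ P,
          (if κ n = k ∧ dd n ≠ 0 ∧ p ∈ V n then dd n ^ (τ:ℝ) else 0) := by rw [hswap]
    _ ≤ (w ^ (k + 1) : ℝ≥0∞) ^ (u - (τ:ℝ)) *
          ∑' n, (if κ n = k ∧ dd n ≠ 0 then dd n ^ (τ:ℝ) else 0) :=
          mul_le_mul_right (ENNReal.tsum_le_tsum hcount1) _
    _ ≤ T k := hTk1
  -- final assembly
  have hT : ∑' k, T k ≤ ∑' n, m0 u (U n) := by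
    have h1 : ∀ n, (∑' k : ℕ, if κ n = k ∧ dd n ≠ 0 then dd n ^ u else 0) ≤ m0 u (U n) := by
      intro n
      rw [tsum_eq_single (κ n) (fun k' hk' => by
        rw [if_neg]; rintro ⟨rfl, -⟩; exact hk' rfl)]
      by_cases hd0 : dd n = 0
      · rw [if_neg (by rintro ⟨-, h⟩; exact h hd0)]
        exact zero_le
      · rw [if_pos ⟨rfl, hd0⟩]
        have hne : (U n).Nonempty := by
          rcases (U n).eq_empty_or_nonempty with he | hne
          · exact absurd (by rw [hdddef]; simp [he, EMetric.diam] : dd n = 0) hd0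
          · exact hne
        rw [m0_of_nonempty hne]
    calc ∑' k, T k = ∑' n, ∑' k : ℕ, (if κ n = k ∧ dd n ≠ 0 then dd n ^ u else 0) :=
          ENNReal.tsum_comm
    _ ≤ ∑' n, m0 u (U n) := ENNReal.tsum_le_tsum h1
  calc c₀ = c₀ * 1 := (mul_one _).symm
  _ ≤ c₀ * Hd (σ:ℝ) rA A := mul_le_mul_right hrA _
  _ ≤ c₀ * Hd (σ:ℝ) rA (⋃ k, Ak k) := mul_le_mul_right (Hd_mono hAunion) _
  _ ≤ c₀ * ∑' k, Hd (σ:ℝ) rA (Ak k) := mul_le_mul_right (Hd_iUnion_le _ _ _) _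
  _ = ∑' k, c₀ * Hd (σ:ℝ) rA (Ak k) := (ENNReal.tsum_mul_left).symm
  _ ≤ ∑' k, T k := ENNReal.tsum_le_tsum hkey
  _ ≤ ∑' n, m0 u (U n) := hT

end HdInfra

section Embed

variable {X Y : Type*} [MetricSpace X] [MetricSpace Y]

lemma dimH_le_prod_left {A : Set X} {B : Set Y} (hB : B.Nonempty) :
    dimH A ≤ dimH (A ×ˢ B) := by
  borelize (X × Y)
  obtain ⟨b, hb⟩ := hB
  have hiso : Isometry (fun x : X => ((x, b) : X × Y)) := by
    intro x x'
    simp [Prod.edist_eq]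
  calc dimH A = dimH ((fun x => ((x, b) : X × Y)) '' A) := (hiso.dimH_image A).symm
  _ ≤ dimH (A ×ˢ B) := dimH_mono (by rintro _ ⟨x, hx, rfl⟩; exact ⟨hx, hb⟩)

lemma dimH_le_prod_right {A : Set X} {B : Set Y} (hA : A.Nonempty) :
    dimH B ≤ dimH (A ×ˢ B) := by
  borelize (X × Y)
  obtain ⟨a, ha⟩ := hA
  have hiso : Isometry (fun y : Y => ((a, y) : X × Y)) := by
    intro y y'
    simp [Prod.edist_eq]
  calc dimH B = dimH ((fun y => ((a, y) : X × Y)) '' B) := (hiso.dimH_image B).symm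
  _ ≤ dimH (A ×ˢ B) := dimH_mono (by rintro _ ⟨y, hy, rfl⟩; exact ⟨ha, hy⟩)


lemma dimH_add_le_dimH_prod [SecondCountableTopology X] [SecondCountableTopology Y]
    {A : Set X} {B : Set Y} (hA : A.Nonempty) (hB : B.Nonempty) (hAb : TotallyBounded A) :
    dimH A + dimH B ≤ dimH (A ×ˢ B) := by
  rcases eq_or_ne (dimH A) 0 with h0 | hA0
  · rw [h0, zero_add]; exact dimH_le_prod_right hA
  rcases eq_or_ne (dimH B) 0 with h0 | hB0
  · rw [h0, add_zero]; exact dimH_le_prod_left hB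
  refine ENNReal.le_of_forall_nnreal_lt fun r hr => ?_
  obtain ⟨y', hy', z', hz', hrlt⟩ := ENNReal.exists_lt_add_of_lt_add hr hA0 hB0
  obtain ⟨s, hys, hsA⟩ := ENNReal.lt_iff_exists_nnreal_btwn.1 hy'
  obtain ⟨t, hzt, htB⟩ := ENNReal.lt_iff_exists_nnreal_btwn.1 hz'
  have hs : 0 < s := by
    rcases eq_or_ne s 0 with rfl | h
    · exact absurd hys (by simp)
    · exact pos_iff_ne_zero.2 h
  have ht : 0 < t := by
    rcases eq_or_ne t 0 with rfl | h
    · exact absurd hzt (by simp)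
    · exact pos_iff_ne_zero.2 h
  calc (r : ℝ≥0∞) ≤ (s : ℝ≥0∞) + (t : ℝ≥0∞) :=
        le_trans hrlt.le (add_le_add hys.le hzt.le)
  _ ≤ dimH (A ×ˢ B) := add_le_dimH_prod hAb s t hs ht hsA htB

end Embed

section BoxDims

noncomputable abbrev boxFn {X : Type*} [MetricSpace X] (Z : Set X) (δ : ℝ) : ℝ≥0∞ :=
  ENNReal.ofReal (Real.log (coverNum Z δ) / (-Real.log δ))

variable {X Y : Type*} [MetricSpace X] [MetricSpace Y]


lemma lowerBoxDim_le_upper {Z : Set X} : lowerBoxDim Z ≤ upperBoxDim Z :=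
  liminf_le_limsup (by isBoundedDefault) (by isBoundedDefault)

lemma upperBoxDim_prod_le {A : Set X} {B : Set Y} (hA : A.Nonempty) (hB : B.Nonempty)
    (hAb : TotallyBounded A) (hBb : TotallyBounded B) :
    upperBoxDim (A ×ˢ B) ≤ upperBoxDim A + upperBoxDim B := by
  have hev : ∀ᶠ δ in 𝓝[>] (0:ℝ),
      ENNReal.ofReal (Real.log (coverNum (A ×ˢ B) δ) / (-Real.log δ)) ≤
      ENNReal.ofReal (Real.log (coverNum A δ) / (-Real.log δ)) +
      ENNReal.ofReal (Real.log (coverNum B δ) / (-Real.log δ)) := by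
    filter_upwards [Ioo_mem_nhdsGT_of_mem (by simp : (0:ℝ) ∈ Ico (0:ℝ) 1)] with δ hδ
    have hδ0 : (0:ℝ) < δ := hδ.1
    have hL : 0 < -Real.log δ := by
      have := Real.log_neg hδ0 hδ.2; linarith
    have hNA := coverNum_pos hAb hA hδ0
    have hNB := coverNum_pos hBb hB hδ0
    have hprod := coverNum_prod_le hAb hBb hδ0
    have hlogA : 0 ≤ Real.log (coverNum A δ) := Real.log_nonneg (by exact_mod_cast hNA)
    have hlogB : 0 ≤ Real.log (coverNum B δ) := Real.log_nonneg (by exact_mod_cast hNB)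
    have hmul : Real.log (coverNum (A ×ˢ B) δ) ≤
        Real.log (coverNum A δ) + Real.log (coverNum B δ) := by
      have h1 : (0:ℝ) < (coverNum (A ×ˢ B) δ : ℝ) := by
        have := coverNum_pos (totallyBounded_prod hAb hBb) (hA.prod hB) hδ0
        · exact_mod_cast this
      calc Real.log (coverNum (A ×ˢ B) δ) ≤ Real.log ((coverNum A δ : ℝ) * (coverNum B δ : ℝ)) := by
            apply Real.log_le_log h1
            exact_mod_cast hprod
      _ = Real.log (coverNum A δ) + Real.log (coverNum B δ) := by
            rw [Real.log_mul (by positivity) (by positivity)]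
    have hdiv : Real.log (coverNum (A ×ˢ B) δ) / (-Real.log δ) ≤
        Real.log (coverNum A δ) / (-Real.log δ) + Real.log (coverNum B δ) / (-Real.log δ) := by
      rw [← add_div]
      exact div_le_div_of_nonneg_right hmul hL.le
    calc ENNReal.ofReal (Real.log (coverNum (A ×ˢ B) δ) / (-Real.log δ))
        ≤ ENNReal.ofReal (Real.log (coverNum A δ) / (-Real.log δ) +
            Real.log (coverNum B δ) / (-Real.log δ)) := ENNReal.ofReal_le_ofReal hdiv
    _ = _ := ENNReal.ofReal_add (by positivity) (by positivity)
  calc upperBoxDim (A ×ˢ B) ≤ limsup (fun δ =>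
        ENNReal.ofReal (Real.log (coverNum A δ) / (-Real.log δ)) +
        ENNReal.ofReal (Real.log (coverNum B δ) / (-Real.log δ))) (𝓝[>] (0:ℝ)) :=
      limsup_le_limsup hev
  _ ≤ upperBoxDim A + upperBoxDim B := ennreal_limsup_add_le _ _





lemma dimH_le_lowerBoxDim [MeasurableSpace X] [BorelSpace X] {Z : Set X}
    (hZb : TotallyBounded Z) (hZ : Z.Nonempty) : dimH Z ≤ lowerBoxDim Z := by
  refine dimH_le fun d' hd' => ?_
  by_contra hcon
  have hlt : lowerBoxDim Z < (d' : ℝ≥0∞) := not_le.1 hcon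
  have hd'0 : 0 < (d' : ℝ) := by
    have hne : d' ≠ 0 := by rintro rfl; simp at hlt
    exact NNReal.coe_pos.2 (pos_iff_ne_zero.2 hne)
  have hfreq : ∃ᶠ δ in 𝓝[>] (0:ℝ),
      ENNReal.ofReal (Real.log (coverNum Z δ) / (-Real.log δ)) < (d' : ℝ≥0∞) :=
    frequently_lt_of_liminf_lt (by isBoundedDefault) hlt
  have hsel : ∀ j : ℕ, ∃ δ : ℝ, (0 < δ ∧ δ < min 1 (1/((j:ℝ)+1))) ∧
      ENNReal.ofReal (Real.log (coverNum Z δ) / (-Real.log δ)) < (d' : ℝ≥0∞) := by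
    intro j
    have hmem : Ioo (0:ℝ) (min 1 (1/((j:ℝ)+1))) ∈ 𝓝[>] (0:ℝ) :=
      Ioo_mem_nhdsGT_of_mem (by constructor <;> [rfl; positivity])
    obtain ⟨δ, h1, h2⟩ := (hfreq.and_eventually (eventually_of_mem hmem fun x hx => hx)).exists
    exact ⟨δ, ⟨h2.1, h2.2⟩, h1⟩
  choose δ hδIoo hδf using hsel
  have hδ0 : ∀ j, 0 < δ j := fun j => (hδIoo j).1
  have hδ1 : ∀ j, δ j < 1 := fun j => lt_of_lt_of_le (hδIoo j).2 (min_le_left _ _)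
  have hL : ∀ j, 0 < -Real.log (δ j) := fun j => by
    have := Real.log_neg (hδ0 j) (hδ1 j); linarith
  choose s hscard hscov using fun j => coverNum_spec hZb (hδ0 j)
  -- key numeric bound
  have hsum : ∀ j, (∑' i : {x // x ∈ s j}, EMetric.diam (Metric.ball (i : X) (δ j)) ^ (d' : ℝ))
      ≤ (2 : ℝ≥0∞) ^ (d' : ℝ) := by
    intro j
    have hNpos : 1 ≤ coverNum Z (δ j) := coverNum_pos hZb hZ (hδ0 j)
    have hreal : Real.log (coverNum Z (δ j)) / (-Real.log (δ j)) < (d' : ℝ) := by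
      have := hδf j
      rw [show ((d' : ℝ≥0∞)) = ENNReal.ofReal (d' : ℝ) by
        simp [ENNReal.ofReal_coe_nnreal]] at this
      exact (ENNReal.ofReal_lt_ofReal_iff hd'0).1 this
    have hlogN : Real.log (coverNum Z (δ j)) < (d' : ℝ) * (-Real.log (δ j)) :=
      (div_lt_iff₀ (hL j)).1 hreal
    have hNle : ((coverNum Z (δ j) : ℝ)) ≤ (δ j) ^ (-(d' : ℝ)) := by
      have hNr : (0:ℝ) < (coverNum Z (δ j) : ℝ) := by exact_mod_cast hNpos
      have : ((coverNum Z (δ j) : ℝ)) = Real.exp (Real.log (coverNum Z (δ j))) :=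
        (Real.exp_log hNr).symm
      rw [this, Real.rpow_def_of_pos (hδ0 j)]
      apply (Real.exp_le_exp.2 ?_)
      nlinarith [hlogN]
    have hNle' : ((coverNum Z (δ j) : ℝ≥0∞)) ≤ (ENNReal.ofReal (δ j)) ^ (-(d' : ℝ)) := by
      rw [ENNReal.ofReal_rpow_of_pos (hδ0 j)]
      rw [show ((coverNum Z (δ j) : ℝ≥0∞)) = ENNReal.ofReal (coverNum Z (δ j) : ℝ) by
        simp [ENNReal.ofReal_natCast]]
      exact ENNReal.ofReal_le_ofReal hNle
    have hdiam : ∀ i : {x // x ∈ s j},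
        EMetric.diam (Metric.ball (i : X) (δ j)) ≤ 2 * ENNReal.ofReal (δ j) := fun i => by
      rw [← Metric.emetric_ball]
      exact EMetric.diam_ball
    calc (∑' i : {x // x ∈ s j}, EMetric.diam (Metric.ball (i : X) (δ j)) ^ (d' : ℝ))
        ≤ ∑' _i : {x // x ∈ s j}, (2 * ENNReal.ofReal (δ j)) ^ (d' : ℝ) :=
          ENNReal.tsum_le_tsum fun i => ENNReal.rpow_le_rpow (hdiam i) d'.coe_nonneg
    _ = (s j).card * (2 * ENNReal.ofReal (δ j)) ^ (d' : ℝ) := by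
          rw [tsum_fintype]
          simp [Finset.sum_const, Fintype.card_coe]
    _ = (coverNum Z (δ j) : ℝ≥0∞) * ((2:ℝ≥0∞) ^ (d' : ℝ) * ENNReal.ofReal (δ j) ^ (d' : ℝ)) := by
          rw [hscard j, ENNReal.mul_rpow_of_nonneg _ _ d'.coe_nonneg]
    _ ≤ (ENNReal.ofReal (δ j)) ^ (-(d' : ℝ)) *
          ((2:ℝ≥0∞) ^ (d' : ℝ) * ENNReal.ofReal (δ j) ^ (d' : ℝ)) := by
          exact mul_le_mul_left hNle' _
    _ = (2:ℝ≥0∞) ^ (d' : ℝ) *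
          ((ENNReal.ofReal (δ j)) ^ (-(d' : ℝ)) * ENNReal.ofReal (δ j) ^ (d' : ℝ)) := by ring
    _ = (2:ℝ≥0∞) ^ (d' : ℝ) := by
          rw [← ENNReal.rpow_add _ _ (by simp [ENNReal.ofReal_eq_zero, not_le, hδ0 j])
            ENNReal.ofReal_ne_top]
          simp
  have hmain : μH[(d' : ℝ)] Z ≤ (2:ℝ≥0∞) ^ (d' : ℝ) := by
    have happ := MeasureTheory.Measure.hausdorffMeasure_le_liminf_tsum (ι := fun j : ℕ => {x // x ∈ s j}) (l := atTop) (d' : ℝ) Z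
      (fun j : ℕ => ENNReal.ofReal (2 * δ j)) ?_ (fun j i => Metric.ball (i : X) (δ j)) ?_ ?_
    · refine happ.trans ?_
      have : liminf (fun j : ℕ => ∑' i : {x // x ∈ s j},
          EMetric.diam (Metric.ball (i : X) (δ j)) ^ (d' : ℝ)) atTop ≤ (2:ℝ≥0∞) ^ (d' : ℝ) := by
        refine liminf_le_of_le (by isBoundedDefault) ?_
        intro b hb
        obtain ⟨j, hj⟩ := hb.exists
        exact hj.trans (hsum j)
      exact this
    · -- tendsto
      have h1 : Filter.Tendsto (fun j : ℕ => 2 * δ j) atTop (𝓝 0) := by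
        have hub : ∀ j : ℕ, δ j ≤ 1/((j:ℝ)+1) := fun j =>
          (lt_of_lt_of_le (hδIoo j).2 (min_le_right _ _)).le
        have h0 : Filter.Tendsto (fun j : ℕ => (1:ℝ)/(j+1)) atTop (𝓝 0) :=
          tendsto_one_div_add_atTop_nhds_zero_nat
        have := squeeze_zero (fun j => (hδ0 j).le) hub h0
        simpa using this.const_mul 2
      have := (ENNReal.continuous_ofReal.tendsto 0).comp h1
      simpa [Function.comp_def] using this
    · exact Filter.Eventually.of_forall fun j => fun i => by
        show EMetric.diam (Metric.ball (i : X) (δ j)) ≤ ENNReal.ofReal (2 * δ j)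
        rw [← Metric.emetric_ball]
        refine EMetric.diam_ball.trans ?_
        rw [ENNReal.ofReal_mul (by norm_num)]
        simp
    · exact Filter.Eventually.of_forall fun j => by
        show Z ⊆ ⋃ i : {x // x ∈ s j}, Metric.ball (i : X) (δ j)
        intro z hz
        have := hscov j hz
        rw [Set.mem_iUnion₂] at this
        obtain ⟨x, hx, hxz⟩ := this
        exact Set.mem_iUnion.2 ⟨⟨x, hx⟩, hxz⟩
  rw [hd'] at hmain
  exact (ENNReal.rpow_ne_top_of_nonneg d'.coe_nonneg (by norm_num) (top_le_iff.1 hmain))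


end BoxDims

/-- For subsets `A ⊆ X`, `B ⊆ Y` of metric spaces, the product `A × B` (with the max
metric on `X × Y`) satisfies
`dim_H A + dim_H B ≤ dim_H (A × B) ≤ underline dim_B (A × B) ≤ overline dim_B (A × B)
  ≤ overline dim_B A + overline dim_B B`. -/
theorem dimension_of_product
    {X Y : Type*} [MetricSpace X] [MetricSpace Y]
    [MeasurableSpace X] [BorelSpace X] [SecondCountableTopology X]
    [MeasurableSpace Y] [BorelSpace Y] [SecondCountableTopology Y]
    (A : Set X) (B : Set Y) (hA : A.Nonempty) (hB : B.Nonempty)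
    (hAb : TotallyBounded A) (hBb : TotallyBounded B) :
    dimH A + dimH B ≤ dimH (A ×ˢ B) ∧
    dimH (A ×ˢ B) ≤ lowerBoxDim (A ×ˢ B) ∧
    lowerBoxDim (A ×ˢ B) ≤ upperBoxDim (A ×ˢ B) ∧
    upperBoxDim (A ×ˢ B) ≤ upperBoxDim A + upperBoxDim B := by
  refine ⟨?_, ?_, ?_, ?_⟩
  · exact dimH_add_le_dimH_prod hA hB hAb
  · exact dimH_le_lowerBoxDim (totallyBounded_prod hAb hBb) (hA.prod hB)
  · exact lowerBoxDim_le_upper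
  · exact upperBoxDim_prod_le hA hB hAb hBb
end
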